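/- arXiv:1801.01950 — 3 statements merged into one kernel-verified Lean document; each statement's English description precedes it below -/
import Mathlib

section
/- Let W be a random vector in R^p whose distribution is invariant under every diagonal matrix g with diagonal entries in {1, -1} (i.e., gW has the same distribution as W), and suppose P(W = W_tilde) = 0 where W_tilde is an independent copy of W. Let Omega be an orthogonal p x p matrix, b a vector in R^p, and set V = Omega W + b. Then the multivariate Kendall's tau matrix of V satisfies M_V = Omega Lambda_1 Omega^T for some diagonal p x p matrix Lambda_1; in particular, every column of Omega is an eigenvector of M_V. If moreover E||W||_2^2 < infinity, then Cov(V) = Omega Lambda Omega^T with Lambda = diag(Var(W_1), ..., Var(W_p)), so M_V and Cov(V) are diagonalized by the same orthogonal matrix Omega. -/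
open Matrix MeasureTheory

open scoped Classical in
/-- The multivariate Kendall's tau kernel: for `x ≠ y` it is the rank-one matrix
`(x - y)(x - y)ᵀ / ‖x - y‖²` (Euclidean norm), and it is `0` when `x = y`. -/
noncomputable def kendallKernel {p : ℕ} (x y : EuclideanSpace ℝ (Fin p)) :
    Matrix (Fin p) (Fin p) ℝ :=
  if x = y then 0 else Matrix.of fun i j => (x i - y i) * (x j - y j) / ‖x - y‖ ^ 2

/-- The population multivariate Kendall's tau matrix of a random vector `X`, namely
`E[(X - X̃)(X - X̃)ᵀ / ‖X - X̃‖²]` where `X̃` is an independent copy of `X` (realized on the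
product space `Ω × Ω` with the product measure `μ × μ`). -/
noncomputable def kendallTau {Ω : Type*} [MeasurableSpace Ω] (μ : Measure Ω) {p : ℕ}
    (X : Ω → EuclideanSpace ℝ (Fin p)) : Matrix (Fin p) (Fin p) ℝ :=
  Matrix.of fun i j => ∫ q : Ω × Ω, kendallKernel (X q.1) (X q.2) i j ∂(μ.prod μ)

/-- The covariance matrix of a random vector `V`, entrywise
`Cov(V) i j = E[(V_i - E V_i)(V_j - E V_j)]`. -/
noncomputable def covMatrix {Ω : Type*} [MeasurableSpace Ω] (μ : Measure Ω) {p : ℕ}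
    (V : Ω → EuclideanSpace ℝ (Fin p)) : Matrix (Fin p) (Fin p) ℝ :=
  Matrix.of fun i j =>
    ∫ ω, (V ω i - ∫ ω', V ω' i ∂μ) * (V ω j - ∫ ω', V ω' j ∂μ) ∂μ

namespace KTaux

open scoped Classical

variable {p : ℕ}

lemma norm_sq_eq (x : EuclideanSpace ℝ (Fin p)) : ‖x‖ ^ 2 = ∑ i, x i ^ 2 := by
  rw [EuclideanSpace.norm_eq, Real.sq_sqrt (by positivity)]
  simp [Real.norm_eq_abs, sq_abs]

lemma coord_le_norm (x : EuclideanSpace ℝ (Fin p)) (i : Fin p) : |x i| ≤ ‖x‖ := by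
  have h : x i ^ 2 ≤ ‖x‖ ^ 2 := by
    rw [norm_sq_eq]
    exact Finset.single_le_sum (f := fun k => x k ^ 2) (fun j _ => sq_nonneg _)
      (Finset.mem_univ i)
  calc |x i| = Real.sqrt (x i ^ 2) := (Real.sqrt_sq_eq_abs _).symm
    _ ≤ Real.sqrt (‖x‖ ^ 2) := Real.sqrt_le_sqrt h
    _ = ‖x‖ := Real.sqrt_sq (norm_nonneg _)

lemma measurable_coord {α : Type*} [MeasurableSpace α] {f : α → EuclideanSpace ℝ (Fin p)}
    (hf : Measurable f) (i : Fin p) : Measurable fun a => f a i :=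
  (measurable_pi_apply i).comp ((WithLp.measurable_ofLp 2 (Fin p → ℝ)).comp hf)

lemma measurable_into {α : Type*} [MeasurableSpace α] {f : α → Fin p → ℝ}
    (hf : ∀ i, Measurable fun a => f a i) :
    Measurable (fun a => (WithLp.toLp 2 (f a) : EuclideanSpace ℝ (Fin p))) :=
  (WithLp.measurable_toLp 2 (Fin p → ℝ)).comp (measurable_pi_lambda _ hf)

lemma kendallKernel_apply (x y : EuclideanSpace ℝ (Fin p)) (i j : Fin p) :
    kendallKernel x y i j =
      if x = y then 0 else (x i - y i) * (x j - y j) / ‖x - y‖ ^ 2 := by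
  unfold kendallKernel
  split_ifs <;> simp

lemma kendallKernel_abs_le (x y : EuclideanSpace ℝ (Fin p)) (i j : Fin p) :
    |kendallKernel x y i j| ≤ 1 := by
  rw [kendallKernel_apply]
  split_ifs with h
  · simp
  · have hxy : (0:ℝ) < ‖x - y‖ := by
      rw [norm_pos_iff]; exact sub_ne_zero.mpr h
    rw [abs_div, abs_of_nonneg (by positivity : (0:ℝ) ≤ ‖x - y‖ ^ 2),
      div_le_one (by positivity)]
    have hi : |x i - y i| ≤ ‖x - y‖ := by
      simpa [PiLp.sub_apply] using coord_le_norm (x - y) i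
    have hj : |x j - y j| ≤ ‖x - y‖ := by
      simpa [PiLp.sub_apply] using coord_le_norm (x - y) j
    calc |(x i - y i) * (x j - y j)| = |x i - y i| * |x j - y j| := abs_mul _ _
      _ ≤ ‖x - y‖ * ‖x - y‖ := mul_le_mul hi hj (abs_nonneg _) (norm_nonneg _)
      _ = ‖x - y‖ ^ 2 := (sq _).symm

lemma measurable_kernel (i j : Fin p) :
    Measurable fun q : (EuclideanSpace ℝ (Fin p)) × (EuclideanSpace ℝ (Fin p)) =>
      kendallKernel q.1 q.2 i j := by
  have hd : MeasurableSet {q : (EuclideanSpace ℝ (Fin p)) × (EuclideanSpace ℝ (Fin p)) |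
      q.1 = q.2} := (isClosed_eq continuous_fst continuous_snd).measurableSet
  have h1 : Measurable fun q : (EuclideanSpace ℝ (Fin p)) × (EuclideanSpace ℝ (Fin p)) =>
      (q.1 i - q.2 i) * (q.1 j - q.2 j) / ‖q.1 - q.2‖ ^ 2 := by
    apply Measurable.div
    · exact ((measurable_coord measurable_fst i).sub (measurable_coord measurable_snd i)).mul
        ((measurable_coord measurable_fst j).sub (measurable_coord measurable_snd j))
    · exact ((continuous_fst.sub continuous_snd).norm.pow 2).measurable
  have heq2 : (fun q : (EuclideanSpace ℝ (Fin p)) × (EuclideanSpace ℝ (Fin p)) =>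
      kendallKernel q.1 q.2 i j)
      = fun q => if q.1 = q.2 then (0:ℝ) else
        (q.1 i - q.2 i) * (q.1 j - q.2 j) / ‖q.1 - q.2‖ ^ 2 := by
    funext q
    rw [kendallKernel_apply]
  rw [heq2]
  exact Measurable.ite hd measurable_const h1

end KTaux

theorem kendallTau_elliptical_diagonalization {p : ℕ}
    {Ω : Type*} [MeasurableSpace Ω] (μ : Measure Ω) [IsProbabilityMeasure μ]
    (W : Ω → EuclideanSpace ℝ (Fin p)) (hW : Measurable W)
    (hsym : ∀ s : Fin p → ℝ, (∀ i, s i = 1 ∨ s i = -1) →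
      Measure.map (fun ω => (WithLp.toLp 2 (fun i => s i * W ω i) : EuclideanSpace ℝ (Fin p))) μ =
        Measure.map W μ)
    (hne : (μ.prod μ) {q : Ω × Ω | W q.1 = W q.2} = 0)
    (Omg : Matrix (Fin p) (Fin p) ℝ) (hOmg : Omg * Omgᵀ = 1) (b : Fin p → ℝ)
    (V : Ω → EuclideanSpace ℝ (Fin p))
    (hV : ∀ ω i, V ω i = Omg.mulVec (fun k => W ω k) i + b i) :
    ∃ Lam1 : Fin p → ℝ,
      kendallTau μ V = Omg * Matrix.diagonal Lam1 * Omgᵀ ∧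
      (∀ j, (kendallTau μ V).mulVec (fun i => Omg i j) = Lam1 j • fun i => Omg i j) ∧
      (Integrable (fun ω => ‖W ω‖ ^ 2) μ →
        covMatrix μ V =
          Omg * Matrix.diagonal (fun i => ∫ ω, (W ω i - ∫ ω', W ω' i ∂μ) ^ 2 ∂μ) * Omgᵀ) := by
  classical
  have hOmg' : Omgᵀ * Omg = 1 := mul_eq_one_comm.mp hOmg
  have hWae : AEMeasurable W μ := hW.aemeasurable
  have hWc : ∀ i, Measurable fun ω => W ω i := fun i => KTaux.measurable_coord hW i
  have hWW : Measurable (Prod.map W W) := hW.prodMap hW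
  set ν : Measure (EuclideanSpace ℝ (Fin p)) := μ.map W with hν
  haveI : IsProbabilityMeasure ν := Measure.isProbabilityMeasure_map hWae
  -- sign flip maps
  have hsmeas : ∀ s : Fin p → ℝ,
      Measurable (fun x : EuclideanSpace ℝ (Fin p) =>
        (WithLp.toLp 2 (fun k => s k * x k) : EuclideanSpace ℝ (Fin p))) := fun s =>
    KTaux.measurable_into fun k => measurable_const.mul (KTaux.measurable_coord measurable_id k)
  have hLs : ∀ (s : Fin p → ℝ), (∀ i, s i = 1 ∨ s i = -1) →
      ν.map (fun x : EuclideanSpace ℝ (Fin p) =>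
        (WithLp.toLp 2 (fun k => s k * x k) : EuclideanSpace ℝ (Fin p))) = ν := by
    intro s hs
    rw [hν, Measure.map_map (hsmeas s) hW]
    exact hsym s hs
  have hsign : ∀ i : Fin p, ∀ k, (Function.update (fun _ => (1:ℝ)) i (-1)) k = 1 ∨
      (Function.update (fun _ => (1:ℝ)) i (-1)) k = -1 := by
    intro i k
    by_cases h : k = i <;> simp [Function.update, h]
  have hintW : ∀ g : EuclideanSpace ℝ (Fin p) → ℝ, Measurable g →
      ∫ ω, g (W ω) ∂μ = ∫ x, g x ∂ν :=
    fun g hg => (integral_map hWae hg.aestronglyMeasurable).symm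
  have hflip : ∀ (s : Fin p → ℝ), (∀ i, s i = 1 ∨ s i = -1) →
      ∀ g : EuclideanSpace ℝ (Fin p) → ℝ, Measurable g →
      ∫ x, g x ∂ν = ∫ x, g ((WithLp.toLp 2 (fun k => s k * x k) : EuclideanSpace ℝ (Fin p))) ∂ν := by
    intro s hs g hg
    conv_lhs => rw [← hLs s hs]
    exact integral_map (hsmeas s).aemeasurable hg.aestronglyMeasurable
  -- mean zero coordinates
  have hm0 : ∀ k, (∫ ω, W ω k ∂μ) = 0 := by
    intro k
    set s := Function.update (fun _ => (1:ℝ)) k (-1) with hsdef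
    have hgk : Measurable fun x : EuclideanSpace ℝ (Fin p) => x k :=
      KTaux.measurable_coord measurable_id k
    have h1 : ∫ ω, W ω k ∂μ = ∫ x, x k ∂ν := hintW _ hgk
    have h2 := hflip s (hsign k) _ hgk
    have h3 : ∫ x : EuclideanSpace ℝ (Fin p),
        ((WithLp.toLp 2 (fun m => s m * x m) : EuclideanSpace ℝ (Fin p)) k) ∂ν = - ∫ x, x k ∂ν := by
      have hptw : ∀ x : EuclideanSpace ℝ (Fin p),
          ((WithLp.toLp 2 (fun m => s m * x m) : EuclideanSpace ℝ (Fin p)) k) = -(x k) := by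
        intro x; show s k * x k = -(x k); simp [hsdef]
      rw [integral_congr_ae (ae_of_all _ hptw)]
      exact integral_neg _
    have h4 := h2.trans h3
    rw [h1]; linarith
  -- ============ Kendall tau part ============
  have hFmeas : ∀ i j, Measurable fun q :
      (EuclideanSpace ℝ (Fin p)) × (EuclideanSpace ℝ (Fin p)) =>
      kendallKernel q.1 q.2 i j := fun i j => KTaux.measurable_kernel i j
  have hprod : (μ.prod μ).map (Prod.map W W) = ν.prod ν :=
    (Measure.map_prod_map μ μ hW hW).symm
  have htauW_eq : ∀ i j, (∫ q : Ω × Ω, kendallKernel (W q.1) (W q.2) i j ∂(μ.prod μ))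
      = ∫ q : (EuclideanSpace ℝ (Fin p)) × (EuclideanSpace ℝ (Fin p)),
        kendallKernel q.1 q.2 i j ∂(ν.prod ν) := by
    intro i j
    rw [← hprod, integral_map hWW.aemeasurable (hFmeas i j).aestronglyMeasurable]
    rfl
  -- off-diagonal entries of the W kendall tau vanish
  have hdiagW : ∀ k l, k ≠ l →
      (∫ q : Ω × Ω, kendallKernel (W q.1) (W q.2) k l ∂(μ.prod μ)) = 0 := by
    intro i j hij
    set s := Function.update (fun _ => (1:ℝ)) i (-1) with hsdef
    set L : EuclideanSpace ℝ (Fin p) → EuclideanSpace ℝ (Fin p) :=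
      fun x => (WithLp.toLp 2 (fun k => s k * x k) : EuclideanSpace ℝ (Fin p)) with hLdef
    have hLmeas : Measurable L := hsmeas s
    have hprodinv : (ν.prod ν).map (Prod.map L L) = ν.prod ν := by
      rw [← Measure.map_prod_map ν ν hLmeas hLmeas, hLs s (hsign i)]
    have key : ∫ q : (EuclideanSpace ℝ (Fin p)) × (EuclideanSpace ℝ (Fin p)),
        kendallKernel q.1 q.2 i j ∂(ν.prod ν)
        = ∫ q : (EuclideanSpace ℝ (Fin p)) × (EuclideanSpace ℝ (Fin p)),
          kendallKernel (L q.1) (L q.2) i j ∂(ν.prod ν) := by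
      conv_lhs => rw [← hprodinv]
      rw [integral_map (hLmeas.prodMap hLmeas).aemeasurable
        (hFmeas i j).aestronglyMeasurable]
      rfl
    have hLinj : ∀ x y : EuclideanSpace ℝ (Fin p), L x = L y ↔ x = y := by
      intro x y
      constructor
      · intro h
        apply PiLp.ext
        intro k
        have hk : s k * x k = s k * y k := congrArg (fun z : EuclideanSpace ℝ (Fin p) => z k) h
        have hsk : s k ≠ 0 := by
          rcases hsign i k with h' | h' <;> rw [hsdef, h'] <;> norm_num
        exact mul_left_cancel₀ hsk hk
      · intro h; rw [h]
    have hLnorm : ∀ x y : EuclideanSpace ℝ (Fin p), ‖L x - L y‖ = ‖x - y‖ := by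
      intro x y
      have h2 : ‖L x - L y‖ ^ 2 = ‖x - y‖ ^ 2 := by
        rw [KTaux.norm_sq_eq, KTaux.norm_sq_eq]
        refine Finset.sum_congr rfl fun k _ => ?_
        have hLk : (L x - L y) k = s k * (x k - y k) := by
          rw [PiLp.sub_apply]; show s k * x k - s k * y k = _; ring
        rw [hLk, PiLp.sub_apply, mul_pow]
        rcases hsign i k with h' | h' <;> rw [hsdef, h'] <;> ring
      calc ‖L x - L y‖ = Real.sqrt (‖L x - L y‖ ^ 2) := (Real.sqrt_sq (norm_nonneg _)).symm
        _ = Real.sqrt (‖x - y‖ ^ 2) := by rw [h2]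
        _ = ‖x - y‖ := Real.sqrt_sq (norm_nonneg _)
    have hpt : ∀ x y : EuclideanSpace ℝ (Fin p),
        kendallKernel (L x) (L y) i j = - kendallKernel x y i j := by
      intro x y
      rw [KTaux.kendallKernel_apply, KTaux.kendallKernel_apply]
      by_cases h : x = y
      · rw [if_pos h, if_pos ((hLinj x y).mpr h)]; simp
      · rw [if_neg h, if_neg (fun hc => h ((hLinj x y).mp hc)), hLnorm]
        have hxi : (L x) i - (L y) i = -(x i - y i) := by
          show s i * x i - s i * y i = _
          rw [hsdef, Function.update_self]; ring
        have hxj : (L x) j - (L y) j = x j - y j := by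
          show s j * x j - s j * y j = _
          rw [hsdef, Function.update_of_ne (Ne.symm hij)]; ring
        rw [hxi, hxj]
        ring
    rw [htauW_eq i j]
    have hneg : ∫ q : (EuclideanSpace ℝ (Fin p)) × (EuclideanSpace ℝ (Fin p)),
        kendallKernel q.1 q.2 i j ∂(ν.prod ν)
        = - ∫ q : (EuclideanSpace ℝ (Fin p)) × (EuclideanSpace ℝ (Fin p)),
          kendallKernel q.1 q.2 i j ∂(ν.prod ν) := by
      conv_lhs => rw [key]
      simp_rw [hpt]
      exact integral_neg _
    linarith
  -- integrability of kernel entries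
  have hIntW : ∀ k l, Integrable (fun q : Ω × Ω => kendallKernel (W q.1) (W q.2) k l)
      (μ.prod μ) := by
    intro k l
    refine ⟨((hFmeas k l).comp hWW).aestronglyMeasurable, ?_⟩
    refine HasFiniteIntegral.of_bounded (C := 1) (ae_of_all _ fun q => ?_)
    rw [Real.norm_eq_abs]
    exact KTaux.kendallKernel_abs_le _ _ _ _
  -- coordinate difference formula for V
  have hVsub : ∀ (ω ω' : Ω) (i : Fin p), V ω i - V ω' i
      = ∑ k, Omg i k * (W ω k - W ω' k) := by
    intro ω ω' i
    rw [hV, hV]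
    simp only [Matrix.mulVec, dotProduct]
    simp_rw [mul_sub]
    rw [Finset.sum_sub_distrib]
    ring
  -- orthogonality: sums of squares are preserved
  have hOsum : ∀ v : Fin p → ℝ, ∑ i, (Omg.mulVec v i) ^ 2 = ∑ i, v i ^ 2 := by
    intro v
    have h1 : Omg.mulVec v ⬝ᵥ Omg.mulVec v = v ⬝ᵥ v := by
      rw [Matrix.dotProduct_mulVec]
      have hvm : Omg.mulVec v ᵥ* Omg = v := by
        rw [← Matrix.vecMul_transpose, Matrix.vecMul_vecMul, hOmg', Matrix.vecMul_one]
      rw [hvm]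
    simpa [dotProduct, sq] using h1
  have hWd_norm : ∀ ω ω' : Ω, ‖V ω - V ω'‖ = ‖W ω - W ω'‖ := by
    intro ω ω'
    have h2 : ‖V ω - V ω'‖ ^ 2 = ‖W ω - W ω'‖ ^ 2 := by
      rw [KTaux.norm_sq_eq, KTaux.norm_sq_eq]
      have hl : ∀ i, (V ω - V ω') i = Omg.mulVec (fun k => W ω k - W ω' k) i := by
        intro i
        rw [PiLp.sub_apply, hVsub]
        simp [Matrix.mulVec, dotProduct]
      simp_rw [hl]
      rw [hOsum]
      refine Finset.sum_congr rfl fun k _ => ?_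
      rw [PiLp.sub_apply]
    calc ‖V ω - V ω'‖ = Real.sqrt (‖V ω - V ω'‖ ^ 2) := (Real.sqrt_sq (norm_nonneg _)).symm
      _ = ‖W ω - W ω'‖ := by rw [h2]; exact Real.sqrt_sq (norm_nonneg _)
  -- equality of V's iff equality of W's
  have hVeq : ∀ ω ω' : Ω, V ω = V ω' ↔ W ω = W ω' := by
    intro ω ω'
    constructor
    · intro h
      apply PiLp.ext
      intro m
      have hz : Omg.mulVec (fun k => W ω k - W ω' k) = 0 := by
        funext i
        have hVi : V ω i = V ω' i := by rw [h]
        have := hVsub ω ω' i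
        rw [hVi, sub_self] at this
        simp only [Matrix.mulVec, dotProduct, Pi.zero_apply]
        exact this.symm
      have h2 : Omgᵀ.mulVec (Omg.mulVec (fun k => W ω k - W ω' k))
          = (fun k => W ω k - W ω' k) := by
        rw [Matrix.mulVec_mulVec, hOmg', Matrix.one_mulVec]
      rw [hz, Matrix.mulVec_zero] at h2
      have := congrFun h2 m
      simp only [Pi.zero_apply] at this
      linarith [this.symm]
    · intro h
      apply PiLp.ext
      intro i
      rw [hV, hV]
      have hw : (fun k => W ω k) = (fun k => W ω' k) := by
        funext k; rw [h]
      rw [hw]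
  -- kernel transformation identity
  have hker : ∀ q : Ω × Ω, ∀ i j, kendallKernel (V q.1) (V q.2) i j
      = ∑ k, ∑ l, Omg i k * Omg j l * kendallKernel (W q.1) (W q.2) k l := by
    intro q i j
    by_cases h : W q.1 = W q.2
    · have hv : V q.1 = V q.2 := (hVeq _ _).mpr h
      simp [KTaux.kendallKernel_apply, h, hv]
    · have hVne : V q.1 ≠ V q.2 := fun hc => h ((hVeq _ _).mp hc)
      rw [KTaux.kendallKernel_apply, if_neg hVne, hWd_norm]
      have hWk : ∀ k l, kendallKernel (W q.1) (W q.2) k l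
          = (W q.1 k - W q.2 k) * (W q.1 l - W q.2 l) / ‖W q.1 - W q.2‖ ^ 2 := by
        intro k l; rw [KTaux.kendallKernel_apply, if_neg h]
      simp_rw [hWk]
      rw [hVsub, hVsub, Finset.sum_mul_sum, Finset.sum_div]
      refine Finset.sum_congr rfl fun k _ => ?_
      rw [Finset.sum_div]
      refine Finset.sum_congr rfl fun l _ => ?_
      ring
  -- matrix entry formula
  have hMDM : ∀ (d : Fin p → ℝ) (i j : Fin p),
      (Omg * Matrix.diagonal d * Omgᵀ) i j = ∑ k, Omg i k * d k * Omg j k := by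
    intro d i j
    rw [Matrix.mul_apply]
    refine Finset.sum_congr rfl fun k _ => ?_
    rw [Matrix.mul_diagonal, Matrix.transpose_apply]
  -- double sum reduction
  have hred : ∀ (τ : Fin p → Fin p → ℝ), (∀ k l, k ≠ l → τ k l = 0) → ∀ i j : Fin p,
      (∑ k, ∑ l, Omg i k * Omg j l * τ k l) = ∑ k, Omg i k * τ k k * Omg j k := by
    intro τ hτ i j
    refine Finset.sum_congr rfl fun k _ => ?_
    rw [Finset.sum_eq_single k]
    · ring
    · intro l _ hlk
      rw [hτ k l (fun hc => hlk hc.symm)]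
      ring
    · intro hk; exact absurd (Finset.mem_univ k) hk
  set Lam1 : Fin p → ℝ :=
    fun k => ∫ q : Ω × Ω, kendallKernel (W q.1) (W q.2) k k ∂(μ.prod μ) with hLam
  have hMV : kendallTau μ V = Omg * Matrix.diagonal Lam1 * Omgᵀ := by
    ext i j
    show (∫ q : Ω × Ω, kendallKernel (V q.1) (V q.2) i j ∂(μ.prod μ)) = _
    calc (∫ q : Ω × Ω, kendallKernel (V q.1) (V q.2) i j ∂(μ.prod μ))
        = ∫ q : Ω × Ω, ∑ k, ∑ l, Omg i k * Omg j l * kendallKernel (W q.1) (W q.2) k l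
            ∂(μ.prod μ) := integral_congr_ae (ae_of_all _ fun q => hker q i j)
      _ = ∑ k, ∑ l, Omg i k * Omg j l *
            ∫ q : Ω × Ω, kendallKernel (W q.1) (W q.2) k l ∂(μ.prod μ) := by
          rw [integral_finset_sum _ (fun k _ => integrable_finset_sum _
            (fun l _ => (hIntW k l).const_mul _))]
          refine Finset.sum_congr rfl fun k _ => ?_
          rw [integral_finset_sum _ (fun l _ => (hIntW k l).const_mul _)]
          exact Finset.sum_congr rfl fun l _ => integral_const_mul _ _
      _ = ∑ k, Omg i k * Lam1 k * Omg j k := hred _ hdiagW i j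
      _ = (Omg * Matrix.diagonal Lam1 * Omgᵀ) i j := (hMDM Lam1 i j).symm
  refine ⟨Lam1, hMV, ?_, ?_⟩
  · -- eigenvector statement
    intro j
    have hcol : (fun i => Omg i j) = Omg.mulVec (Pi.single j 1) := by
      funext i; rw [Matrix.mulVec_single]; simp
    rw [hMV, hcol, Matrix.mulVec_mulVec]
    have hM : Omg * Matrix.diagonal Lam1 * Omgᵀ * Omg = Omg * Matrix.diagonal Lam1 := by
      rw [Matrix.mul_assoc (Omg * Matrix.diagonal Lam1), hOmg', Matrix.mul_one]
    rw [hM, ← Matrix.mulVec_mulVec, Matrix.diagonal_mulVec_single]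
    have hsingle : (Pi.single j (Lam1 j * 1) : Fin p → ℝ) = Lam1 j • (Pi.single j 1 : Fin p → ℝ) := by
      funext i
      by_cases hij : i = j
      · subst hij; simp
      · simp [Pi.single_eq_of_ne hij]
    rw [hsingle, Matrix.mulVec_smul]
  · -- covariance statement
    intro hint
    have hsq : ∀ k, Integrable (fun ω => (W ω k) ^ 2) μ := by
      intro k
      refine hint.mono' ((hWc k).pow_const 2).aestronglyMeasurable (ae_of_all _ fun ω => ?_)
      rw [Real.norm_eq_abs, abs_of_nonneg (sq_nonneg _), KTaux.norm_sq_eq]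
      exact Finset.single_le_sum (f := fun i => W ω i ^ 2) (fun j _ => sq_nonneg _)
        (Finset.mem_univ k)
    have hL2 : ∀ k, MemLp (fun ω => W ω k) 2 μ := fun k =>
      (memLp_two_iff_integrable_sq (hWc k).aestronglyMeasurable).mpr (hsq k)
    have hL1 : ∀ k, Integrable (fun ω => W ω k) μ := fun k => (hL2 k).integrable one_le_two
    have h2 : (1:ENNReal) / 1 = 1 / 2 + 1 / 2 := by
      rw [ENNReal.div_add_div_same, div_eq_mul_inv, inv_one, mul_one, one_add_one_eq_two,
        ENNReal.div_self (by norm_num) (by norm_num)]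
    have hmul : ∀ k l, Integrable (fun ω => W ω k * W ω l) μ := by
      intro k l
      exact (hL2 k).integrable_mul (hL2 l)
    have hEV : ∀ i, (∫ ω, V ω i ∂μ) = b i := by
      intro i
      have hfe : (fun ω => V ω i) = fun ω => (∑ k, Omg i k * W ω k) + b i := by
        funext ω; rw [hV]; simp [Matrix.mulVec, dotProduct]
      rw [hfe, integral_add (integrable_finset_sum _ (fun k _ => (hL1 k).const_mul _))
        (integrable_const _)]
      rw [integral_finset_sum _ (fun k _ => (hL1 k).const_mul _)]
      simp [integral_const_mul, hm0, measure_univ]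
    have hVc : ∀ (ω : Ω) (i : Fin p), V ω i - b i = ∑ k, Omg i k * W ω k := by
      intro ω i; rw [hV]; simp [Matrix.mulVec, dotProduct]
    have hC0 : ∀ k l, k ≠ l → (∫ ω, W ω k * W ω l ∂μ) = 0 := by
      intro k l hkl
      have hg : Measurable fun x : EuclideanSpace ℝ (Fin p) => x k * x l :=
        (KTaux.measurable_coord measurable_id k).mul (KTaux.measurable_coord measurable_id l)
      rw [hintW _ hg]
      set s := Function.update (fun _ => (1:ℝ)) k (-1) with hsdef
      have hfl := hflip s (hsign k) _ hg
      have h3 : ∫ x : EuclideanSpace ℝ (Fin p),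
          ((WithLp.toLp 2 (fun m => s m * x m) : EuclideanSpace ℝ (Fin p)) k *
           (WithLp.toLp 2 (fun m => s m * x m) : EuclideanSpace ℝ (Fin p)) l) ∂ν
          = - ∫ x, x k * x l ∂ν := by
        have hptw : ∀ x : EuclideanSpace ℝ (Fin p),
            ((WithLp.toLp 2 (fun m => s m * x m) : EuclideanSpace ℝ (Fin p)) k *
             (WithLp.toLp 2 (fun m => s m * x m) : EuclideanSpace ℝ (Fin p)) l) = -(x k * x l) := by
          intro x
          show (s k * x k) * (s l * x l) = _
          rw [hsdef, Function.update_self, Function.update_of_ne (Ne.symm hkl)]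
          ring
        simp_rw [hptw]
        exact integral_neg _
      have h4 := hfl.trans h3
      linarith
    ext i j
    show (∫ ω, (V ω i - ∫ ω', V ω' i ∂μ) * (V ω j - ∫ ω', V ω' j ∂μ) ∂μ) = _
    rw [hEV i, hEV j]
    calc ∫ ω, (V ω i - b i) * (V ω j - b j) ∂μ
        = ∫ ω, ∑ k, ∑ l, (Omg i k * Omg j l) * (W ω k * W ω l) ∂μ := by
          refine integral_congr_ae (ae_of_all _ fun ω => ?_)
          beta_reduce
          rw [hVc, hVc, Finset.sum_mul_sum]
          exact Finset.sum_congr rfl fun k _ => Finset.sum_congr rfl fun l _ => by ring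
      _ = ∑ k, ∑ l, Omg i k * Omg j l * ∫ ω, W ω k * W ω l ∂μ := by
          rw [integral_finset_sum _ (fun k _ => integrable_finset_sum _
            (fun l _ => (hmul k l).const_mul _))]
          refine Finset.sum_congr rfl fun k _ => ?_
          rw [integral_finset_sum _ (fun l _ => (hmul k l).const_mul _)]
          exact Finset.sum_congr rfl fun l _ => integral_const_mul _ _
      _ = ∑ k, Omg i k * (∫ ω, W ω k * W ω k ∂μ) * Omg j k :=
          hred _ hC0 i j
      _ = (Omg * Matrix.diagonal
            (fun i => ∫ ω, (W ω i - ∫ ω', W ω' i ∂μ) ^ 2 ∂μ) * Omgᵀ) i j := by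
          rw [hMDM]
          refine Finset.sum_congr rfl fun k _ => ?_
          congr 2
          refine integral_congr_ae (ae_of_all _ fun ω => ?_)
          beta_reduce
          rw [hm0 k, sub_zero, sq]
end

section
/- Let W be a random vector in R^p whose distribution is invariant under every diagonal matrix g with diagonal entries in {1, -1} (i.e., gW has the same distribution as W), and suppose P(W = W_tilde) = 0 where W_tilde is an independent copy of W. Then the multivariate Kendall's tau matrix of W is diagonal: its (i, j) entry is 0 for every pair i != j. -/
open Matrix MeasureTheory

open scoped Classical in
lemma kendallKernel_apply {p : ℕ} (x y : EuclideanSpace ℝ (Fin p)) (i j : Fin p) :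
    kendallKernel x y i j =
      if x = y then 0 else (x i - y i) * (x j - y j) / ‖x - y‖ ^ 2 := by
  unfold kendallKernel
  split <;> simp

open scoped Classical in
lemma flip_kernel {p : ℕ} (s : Fin p → ℝ) (hs : ∀ k, s k = 1 ∨ s k = -1)
    (T : EuclideanSpace ℝ (Fin p) → EuclideanSpace ℝ (Fin p))
    (hT : ∀ x k, T x k = s k * x k)
    (i j : Fin p) (hi : s i = -1) (hj : s j = 1) (x y : EuclideanSpace ℝ (Fin p)) :
    kendallKernel (T x) (T y) i j = - kendallKernel x y i j := by
  have hsne : ∀ k, s k ≠ 0 := fun k => by rcases hs k with h | h <;> simp [h]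
  have hsq : ∀ k, s k ^ 2 = 1 := fun k => by rcases hs k with h | h <;> simp [h]
  have hTsub : ∀ u v : EuclideanSpace ℝ (Fin p), ∀ k, (T u - T v) k = s k * (u - v) k := by
    intro u v k
    have h1 : (T u - T v) k = T u k - T v k := rfl
    have h2 : (u - v) k = u k - v k := rfl
    rw [h1, h2, hT, hT, mul_sub]
  have hnorm : ‖T x - T y‖ = ‖x - y‖ := by
    rw [EuclideanSpace.norm_eq, EuclideanSpace.norm_eq]
    congr 1
    apply Finset.sum_congr rfl
    intro k _
    rw [hTsub, Real.norm_eq_abs, Real.norm_eq_abs, sq_abs, sq_abs, mul_pow, hsq, one_mul]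
  by_cases hxy : x = y
  · subst hxy; simp [kendallKernel_apply]
  · have hTne : T x ≠ T y := by
      intro h
      apply hxy
      ext k
      have hk : s k * x k = s k * y k := by rw [← hT, ← hT, h]
      exact mul_left_cancel₀ (hsne k) hk
    rw [kendallKernel_apply, kendallKernel_apply, if_neg hTne, if_neg hxy, hnorm]
    rw [hT, hT, hT, hT, hi, hj]
    ring

open scoped Classical in
lemma kernel_meas {p : ℕ} (i j : Fin p) :
    Measurable (fun q : EuclideanSpace ℝ (Fin p) × EuclideanSpace ℝ (Fin p) =>
      kendallKernel q.1 q.2 i j) := by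
  simp only [kendallKernel_apply]
  apply Measurable.ite
  · exact measurableSet_eq_fun measurable_fst measurable_snd
  · exact measurable_const
  · apply Measurable.div
    · apply Measurable.mul
      · exact (((measurable_pi_apply (X := fun _ : Fin p => ℝ) i).comp (WithLp.measurable_ofLp 2 _)).comp measurable_fst).sub
          (((measurable_pi_apply (X := fun _ : Fin p => ℝ) i).comp (WithLp.measurable_ofLp 2 _)).comp measurable_snd)
      · exact (((measurable_pi_apply (X := fun _ : Fin p => ℝ) j).comp (WithLp.measurable_ofLp 2 _)).comp measurable_fst).sub
          (((measurable_pi_apply (X := fun _ : Fin p => ℝ) j).comp (WithLp.measurable_ofLp 2 _)).comp measurable_snd)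
    · exact ((continuous_fst.sub continuous_snd).norm.measurable).pow_const 2

/-- Let `W` be a random vector in `ℝ^p` whose distribution is invariant
under every diagonal matrix `g` with diagonal entries in `{1, -1}`, and suppose
`P(W = W̃) = 0` where `W̃` is an independent copy of `W`.  Then the multivariate Kendall's
tau matrix of `W` is diagonal: its `(i, j)` entry is `0` for every pair `i ≠ j`. -/
theorem kendallTau_diagonal_of_signSymmetric {p : ℕ}
    {Ω : Type*} [MeasurableSpace Ω] (μ : Measure Ω) [IsProbabilityMeasure μ]
    (W : Ω → EuclideanSpace ℝ (Fin p)) (hW : Measurable W)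
    (hsym : ∀ s : Fin p → ℝ, (∀ i, s i = 1 ∨ s i = -1) →
      Measure.map (fun ω => (WithLp.toLp 2 (fun i => s i * W ω i) : EuclideanSpace ℝ (Fin p))) μ =
        Measure.map W μ)
    (hne : (μ.prod μ) {q : Ω × Ω | W q.1 = W q.2} = 0) :
    ∀ i j : Fin p, i ≠ j → kendallTau μ W i j = 0 := by
  classical
  intro i j hij
  set s : Fin p → ℝ := fun k => if k = i then -1 else 1 with hs_def
  have hs : ∀ k, s k = 1 ∨ s k = -1 := fun k => by
    by_cases h : k = i <;> simp [hs_def, h]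
  have hi : s i = -1 := by simp [hs_def]
  have hj : s j = 1 := by simp [hs_def, Ne.symm hij]
  set T : EuclideanSpace ℝ (Fin p) → EuclideanSpace ℝ (Fin p) :=
    fun x => (WithLp.toLp 2 (fun k => s k * x k) : EuclideanSpace ℝ (Fin p)) with hT_def
  have hTk : ∀ x k, T x k = s k * x k := fun x k => rfl
  have hTmeas : Measurable T := by
    refine (WithLp.measurable_toLp 2 _).comp (measurable_pi_lambda _ ?_)
    intro k
    exact Measurable.const_mul (f := fun x : EuclideanSpace ℝ (Fin p) => x k)
      ((measurable_pi_apply (X := fun _ : Fin p => ℝ) k).comp (WithLp.measurable_ofLp 2 _)) (s k)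
  set ν : Measure (EuclideanSpace ℝ (Fin p)) := Measure.map W μ with hν_def
  have hνprob : IsProbabilityMeasure ν := Measure.isProbabilityMeasure_map hW.aemeasurable
  have hmapT : Measure.map T ν = ν := by
    have h1 : Measure.map (T ∘ W) μ = Measure.map W μ := hsym s hs
    rw [hν_def, Measure.map_map hTmeas hW, h1]
  set G : EuclideanSpace ℝ (Fin p) × EuclideanSpace ℝ (Fin p) → ℝ :=
    fun q => kendallKernel q.1 q.2 i j with hG_def
  have hGmeas : Measurable G := kernel_meas i j
  have step1 : kendallTau μ W i j = ∫ q, G q ∂(ν.prod ν) := by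
    rw [hν_def, Measure.map_prod_map _ _ hW hW]
    rw [integral_map (hW.prodMap hW).aemeasurable hGmeas.aestronglyMeasurable]
    rfl
  have step2 : ∫ q, G q ∂(ν.prod ν) = - ∫ q, G q ∂(ν.prod ν) := by
    conv_lhs => rw [← hmapT, Measure.map_prod_map _ _ hTmeas hTmeas,
      integral_map (hTmeas.prodMap hTmeas).aemeasurable hGmeas.aestronglyMeasurable]
    have : ∀ q : EuclideanSpace ℝ (Fin p) × EuclideanSpace ℝ (Fin p),
        G (Prod.map T T q) = - G q := by
      intro q
      exact flip_kernel s hs T hTk i j hi hj q.1 q.2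
    simp_rw [this]
    rw [integral_neg]
  have : ∫ q, G q ∂(ν.prod ν) = 0 := by linarith
  rw [step1, this]
end

section
/- For any two nonzero vectors u and v in R^p, the normalized rank-one projection matrices satisfy || u u^T / ||u||_2^2 - v v^T / ||v||_2^2 ||_2 <= 2 * (||u||_2 + ||v||_2) * ||u - v||_2 / ||v||_2^2, where the left-hand norm is the spectral norm. -/
open Matrix
open scoped Matrix.Norms.L2Operator

lemma rankOne_l2_opNorm_le {p : ℕ} (x y : EuclideanSpace ℝ (Fin p)) :
    ‖(Matrix.of (fun i j => x i * y j) : Matrix (Fin p) (Fin p) ℝ)‖ ≤ ‖x‖ * ‖y‖ := by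
  rw [Matrix.l2_opNorm_def]
  refine ContinuousLinearMap.opNorm_le_bound _ (by positivity) fun w => ?_
  have key : (Matrix.toEuclideanLin
      (Matrix.of (fun i j => x i * y j) : Matrix (Fin p) (Fin p) ℝ)) w
      = (inner ℝ y w : ℝ) • x := by
    ext i
    simp only [Matrix.toEuclideanLin_apply, Matrix.mulVec, dotProduct,
      Matrix.of_apply, PiLp.inner_apply, RCLike.inner_apply, starRingEnd_apply,
      star_trivial, PiLp.smul_apply, smul_eq_mul, Finset.sum_mul,
      PiLp.toLp_apply]
    exact Finset.sum_congr rfl fun j _ => by ring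
  simp only [LinearEquiv.trans_apply, LinearMap.coe_toContinuousLinearMap']
  rw [key, norm_smul, Real.norm_eq_abs]
  calc |(inner ℝ y w : ℝ)| * ‖x‖ ≤ ‖y‖ * ‖w‖ * ‖x‖ := by
        gcongr
        exact abs_real_inner_le_norm y w
    _ = ‖x‖ * ‖y‖ * ‖w‖ := by ring

/-- For any two nonzero vectors `u` and `v` in `ℝ^p`, the normalized
rank-one projection matrices satisfy
`‖u uᵀ / ‖u‖² - v vᵀ / ‖v‖²‖₂ ≤ 2 (‖u‖ + ‖v‖) ‖u - v‖ / ‖v‖²`,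
where the left-hand norm is the spectral (ℓ²-to-ℓ²) norm. -/
theorem normalized_rankOne_diff_le {p : ℕ} (u v : EuclideanSpace ℝ (Fin p))
    (hu : u ≠ 0) (hv : v ≠ 0) :
    ‖((‖u‖ ^ 2)⁻¹ • Matrix.of (fun i j => u i * u j) -
        (‖v‖ ^ 2)⁻¹ • Matrix.of (fun i j => v i * v j) : Matrix (Fin p) (Fin p) ℝ)‖ ≤
      2 * (‖u‖ + ‖v‖) * ‖u - v‖ / ‖v‖ ^ 2 := by
  have ha : (0:ℝ) < ‖u‖ := norm_pos_iff.mpr hu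
  have hb : (0:ℝ) < ‖v‖ := norm_pos_iff.mpr hv
  set a : ℝ := ‖u‖ with ha_def
  set b : ℝ := ‖v‖ with hb_def
  set d : ℝ := ‖u - v‖ with hd_def
  have hd0 : (0:ℝ) ≤ d := norm_nonneg _
  -- decomposition
  have hdecomp : ((a ^ 2)⁻¹ • Matrix.of (fun i j => u i * u j) -
        (b ^ 2)⁻¹ • Matrix.of (fun i j => v i * v j) : Matrix (Fin p) (Fin p) ℝ)
      = (b ^ 2)⁻¹ • (Matrix.of (fun i j => u i * (u - v) j) : Matrix (Fin p) (Fin p) ℝ)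
        + (b ^ 2)⁻¹ • (Matrix.of (fun i j => (u - v) i * v j) : Matrix (Fin p) (Fin p) ℝ)
        + ((a ^ 2)⁻¹ - (b ^ 2)⁻¹) • (Matrix.of (fun i j => u i * u j) :
            Matrix (Fin p) (Fin p) ℝ) := by
    ext i j
    simp only [Matrix.sub_apply, Matrix.add_apply, Matrix.smul_apply, Matrix.of_apply,
      smul_eq_mul, PiLp.sub_apply]
    ring
  rw [hdecomp]
  have h1 : ‖((b ^ 2)⁻¹ • (Matrix.of (fun i j => u i * (u - v) j) :
      Matrix (Fin p) (Fin p) ℝ))‖ ≤ (b ^ 2)⁻¹ * (a * d) := by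
    rw [norm_smul, Real.norm_eq_abs, abs_of_nonneg (by positivity)]
    gcongr
    exact rankOne_l2_opNorm_le u (u - v)
  have h2 : ‖((b ^ 2)⁻¹ • (Matrix.of (fun i j => (u - v) i * v j) :
      Matrix (Fin p) (Fin p) ℝ))‖ ≤ (b ^ 2)⁻¹ * (d * b) := by
    rw [norm_smul, Real.norm_eq_abs, abs_of_nonneg (by positivity)]
    gcongr
    exact rankOne_l2_opNorm_le (u - v) v
  have hcoef : |(a ^ 2)⁻¹ - (b ^ 2)⁻¹| ≤ (a + b) * d / (a ^ 2 * b ^ 2) := by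
    have h3 : |b - a| ≤ d := by
      rw [hd_def, ha_def, hb_def]
      have := abs_norm_sub_norm_le v u
      rwa [norm_sub_rev v u] at this
    have heq : (a ^ 2)⁻¹ - (b ^ 2)⁻¹ = (b - a) * (b + a) / (a ^ 2 * b ^ 2) := by
      field_simp; ring
    rw [heq, abs_div, abs_of_pos (by positivity : (0:ℝ) < a ^ 2 * b ^ 2), abs_mul,
      abs_of_pos (by positivity : (0:ℝ) < b + a)]
    gcongr ?_ / _
    nlinarith [abs_nonneg (b - a), add_pos ha hb]
  have h3 : ‖(((a ^ 2)⁻¹ - (b ^ 2)⁻¹) • (Matrix.of (fun i j => u i * u j) :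
      Matrix (Fin p) (Fin p) ℝ))‖ ≤ (a + b) * d / (a ^ 2 * b ^ 2) * (a * a) := by
    rw [norm_smul, Real.norm_eq_abs]
    exact mul_le_mul hcoef (rankOne_l2_opNorm_le u u) (norm_nonneg _) (by positivity)
  calc ‖_ + _ + _‖ ≤ ‖_ + _‖ + ‖_‖ := norm_add_le _ _
    _ ≤ ‖_‖ + ‖_‖ + ‖_‖ := by gcongr; exact norm_add_le _ _
    _ ≤ (b ^ 2)⁻¹ * (a * d) + (b ^ 2)⁻¹ * (d * b)
        + (a + b) * d / (a ^ 2 * b ^ 2) * (a * a) := by gcongr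
    _ = 2 * (a + b) * d / b ^ 2 := by field_simp; ring
end
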